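/- If det Q_{α,β,γ} > 0 (where Q_{α,β,γ} = [[-1,α,γ],[α,-1,β],[γ,β,-1]]), then there exist real numbers x, y such that the element v = x(α - e₁e₂) + y(γ - e₃e₁) in H_{α,β,γ} satisfies v² = -1, and v anticommutes with e₁; consequently, the subalgebra generated by e₁ and v is isomorphic to the quaternion algebra ℍ. -/

import Mathlib

open scoped Quaternion

/-- The defining relations of the algebra `H_{α,β,γ}`. -/
inductive HRel (α β γ : ℝ) : FreeAlgebra ℝ (Fin 3) → FreeAlgebra ℝ (Fin 3) → Prop
  | sq1 : HRel α β γ (FreeAlgebra.ι ℝ 0 * FreeAlgebra.ι ℝ 0) (-1)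
  | sq2 : HRel α β γ (FreeAlgebra.ι ℝ 1 * FreeAlgebra.ι ℝ 1) (-1)
  | sq3 : HRel α β γ (FreeAlgebra.ι ℝ 2 * FreeAlgebra.ι ℝ 2) (-1)
  | ac12 : HRel α β γ (FreeAlgebra.ι ℝ 0 * FreeAlgebra.ι ℝ 1 + FreeAlgebra.ι ℝ 1 * FreeAlgebra.ι ℝ 0)
      (algebraMap ℝ (FreeAlgebra ℝ (Fin 3)) (2 * α))
  | ac23 : HRel α β γ (FreeAlgebra.ι ℝ 1 * FreeAlgebra.ι ℝ 2 + FreeAlgebra.ι ℝ 2 * FreeAlgebra.ι ℝ 1)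
      (algebraMap ℝ (FreeAlgebra ℝ (Fin 3)) (2 * β))
  | ac31 : HRel α β γ (FreeAlgebra.ι ℝ 2 * FreeAlgebra.ι ℝ 0 + FreeAlgebra.ι ℝ 0 * FreeAlgebra.ι ℝ 2)
      (algebraMap ℝ (FreeAlgebra ℝ (Fin 3)) (2 * γ))

/-- The algebra `H_{α,β,γ}`. -/
abbrev HAlg (α β γ : ℝ) : Type := RingQuot (HRel α β γ)

/-- The generators `e₁, e₂, e₃` of `H_{α,β,γ}`. -/
noncomputable def eH (α β γ : ℝ) (i : Fin 3) : HAlg α β γ :=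
  RingQuot.mkAlgHom ℝ (HRel α β γ) (FreeAlgebra.ι ℝ i)

section Aux

variable (α β γ : ℝ)

/-- The Gram matrix of `H_{α,β,γ}`. -/
def QmatH : Matrix (Fin 3) (Fin 3) ℝ := !![(-1 : ℝ), α, γ; α, -1, β; γ, β, -1]

/-- The quadratic form associated to the Gram matrix. -/
noncomputable def QformH : QuadraticForm ℝ (Fin 3 → ℝ) := (QmatH α β γ).toQuadraticMap'

lemma QformH_single (i : Fin 3) : QformH α β γ (Pi.single i 1) = QmatH α β γ i i := by
  rw [QformH, Matrix.toQuadraticMap', Matrix.toQuadraticForm', LinearMap.BilinMap.toQuadraticMap_apply]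
  exact Matrix.toLinearMap₂'Aux_single _ _ (QmatH α β γ) i i

lemma QformH_polar (i j : Fin 3) :
    QuadraticMap.polar (QformH α β γ) (Pi.single i 1) (Pi.single j 1) =
      QmatH α β γ i j + QmatH α β γ j i := by
  rw [QformH, Matrix.toQuadraticMap', Matrix.toQuadraticForm', LinearMap.BilinMap.polar_toQuadraticMap]
  exact congrArg₂ (· + ·) (Matrix.toLinearMap₂'Aux_single _ _ (QmatH α β γ) i j)
    (Matrix.toLinearMap₂'Aux_single _ _ (QmatH α β γ) j i)

/-- The representation of `H_{α,β,γ}` on the Clifford algebra of `QformH`. -/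
noncomputable def toCliff : HAlg α β γ →ₐ[ℝ] CliffordAlgebra (QformH α β γ) :=
  RingQuot.liftAlgHom ℝ
    ⟨FreeAlgebra.lift ℝ (fun i => CliffordAlgebra.ι (QformH α β γ) (Pi.single i 1)), by
      intro x y h
      induction h with
      | sq1 =>
          rw [map_mul, FreeAlgebra.lift_ι_apply, CliffordAlgebra.ι_sq_scalar, QformH_single,
            show QmatH α β γ 0 0 = -1 from rfl, map_neg, map_one, map_neg, map_one]
      | sq2 =>
          rw [map_mul, FreeAlgebra.lift_ι_apply, CliffordAlgebra.ι_sq_scalar, QformH_single,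
            show QmatH α β γ 1 1 = -1 from rfl, map_neg, map_one, map_neg, map_one]
      | sq3 =>
          rw [map_mul, FreeAlgebra.lift_ι_apply, CliffordAlgebra.ι_sq_scalar, QformH_single,
            show QmatH α β γ 2 2 = -1 from rfl, map_neg, map_one, map_neg, map_one]
      | ac12 =>
          rw [map_add, map_mul, map_mul, FreeAlgebra.lift_ι_apply, FreeAlgebra.lift_ι_apply,
            CliffordAlgebra.ι_mul_ι_add_swap, QformH_polar, AlgHom.commutes,
            show QmatH α β γ 0 1 = α from rfl, show QmatH α β γ 1 0 = α from rfl, two_mul]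
      | ac23 =>
          rw [map_add, map_mul, map_mul, FreeAlgebra.lift_ι_apply, FreeAlgebra.lift_ι_apply,
            CliffordAlgebra.ι_mul_ι_add_swap, QformH_polar, AlgHom.commutes,
            show QmatH α β γ 1 2 = β from rfl, show QmatH α β γ 2 1 = β from rfl, two_mul]
      | ac31 =>
          rw [map_add, map_mul, map_mul, FreeAlgebra.lift_ι_apply, FreeAlgebra.lift_ι_apply,
            CliffordAlgebra.ι_mul_ι_add_swap, QformH_polar, AlgHom.commutes,
            show QmatH α β γ 2 0 = γ from rfl, show QmatH α β γ 0 2 = γ from rfl, two_mul]⟩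

instance : Nontrivial (HAlg α β γ) := by
  refine ⟨1, 0, fun h => ?_⟩
  have := congrArg (toCliff α β γ) h
  rw [map_one, map_zero] at this
  exact one_ne_zero this

end Aux

/-- An indefinite binary quadratic form represents `1`. -/
lemma exists_repr_one (A B C : ℝ) (hD : 0 < B ^ 2 - A * C) :
    ∃ x y : ℝ, A * x ^ 2 + 2 * B * x * y + C * y ^ 2 = 1 := by
  by_cases hC : C = 0
  · subst hC
    have hB : B ≠ 0 := by intro h; rw [h] at hD; nlinarith
    refine ⟨1, (1 - A) / (2 * B), ?_⟩
    field_simp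
    ring
  · set x : ℝ := Real.sqrt ((|C| + 1) / (B ^ 2 - A * C)) with hx
    have hxa : (0:ℝ) ≤ (|C| + 1) / (B ^ 2 - A * C) :=
      div_nonneg (by positivity) hD.le
    have hx2 : x ^ 2 = (|C| + 1) / (B ^ 2 - A * C) := Real.sq_sqrt hxa
    have hx2' : x ^ 2 * (B ^ 2 - A * C) = |C| + 1 := by
      rw [hx2]; field_simp
    have harg : (0:ℝ) ≤ x ^ 2 * (B ^ 2 - A * C) + C := by
      rw [hx2']
      have : -C ≤ |C| := neg_le_abs C
      linarith
    set s : ℝ := Real.sqrt (x ^ 2 * (B ^ 2 - A * C) + C) with hs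
    have hs2 : s ^ 2 = x ^ 2 * (B ^ 2 - A * C) + C := Real.sq_sqrt harg
    refine ⟨x, (-B * x + s) / C, ?_⟩
    set y : ℝ := (-B * x + s) / C with hy
    have hCy : C * y = -B * x + s := by rw [hy]; field_simp
    have key : (C * y + B * x) ^ 2 = x ^ 2 * (B ^ 2 - A * C) + C := by
      rw [hCy]; ring_nf; ring_nf at hs2; linarith
    refine mul_left_cancel₀ hC ?_
    rw [mul_one]
    linear_combination key

/-- The main computation: `v = x(α - e₀e₁) + y(γ - e₂e₀)` squares to `-1` and
anticommutes with `e₀`, in any `ℝ`-algebra with the relevant relations. -/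
lemma aux_main (H : Type) [Ring H] [Algebra ℝ H] (α β γ x y : ℝ) (E0 E1 E2 : H)
    (h0 : E0 * E0 = -1) (h1 : E1 * E1 = -1) (h2 : E2 * E2 = -1)
    (h01 : E0 * E1 + E1 * E0 = algebraMap ℝ H α + algebraMap ℝ H α)
    (h12 : E1 * E2 + E2 * E1 = algebraMap ℝ H β + algebraMap ℝ H β)
    (h20 : E2 * E0 + E0 * E2 = algebraMap ℝ H γ + algebraMap ℝ H γ)
    (hxy : (1 - α ^ 2) * x ^ 2 + 2 * (α * γ + β) * x * y + (1 - γ ^ 2) * y ^ 2 = 1) :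
    (x • (algebraMap ℝ H α - E0 * E1) + y • (algebraMap ℝ H γ - E2 * E0)) *
        (x • (algebraMap ℝ H α - E0 * E1) + y • (algebraMap ℝ H γ - E2 * E0)) = -1 ∧
      (x • (algebraMap ℝ H α - E0 * E1) + y • (algebraMap ℝ H γ - E2 * E0)) * E0 +
        E0 * (x • (algebraMap ℝ H α - E0 * E1) + y • (algebraMap ℝ H γ - E2 * E0)) = 0 := by
  have hA0 : algebraMap ℝ H α * E0 = E0 * algebraMap ℝ H α := Algebra.commutes α E0
  have hA1 : algebraMap ℝ H α * E1 = E1 * algebraMap ℝ H α := Algebra.commutes α E1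
  have hA2 : algebraMap ℝ H α * E2 = E2 * algebraMap ℝ H α := Algebra.commutes α E2
  have hC0 : algebraMap ℝ H γ * E0 = E0 * algebraMap ℝ H γ := Algebra.commutes γ E0
  have hC1 : algebraMap ℝ H γ * E1 = E1 * algebraMap ℝ H γ := Algebra.commutes γ E1
  have hC2 : algebraMap ℝ H γ * E2 = E2 * algebraMap ℝ H γ := Algebra.commutes γ E2
  have hACc : algebraMap ℝ H α * algebraMap ℝ H γ = algebraMap ℝ H γ * algebraMap ℝ H α :=
    Algebra.commutes α _
  set A : H := algebraMap ℝ H α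
  set B : H := algebraMap ℝ H β
  set C : H := algebraMap ℝ H γ
  have L1 : (A - E0 * E1) * (A - E0 * E1) = A * A - 1 := by
    linear_combination (norm := noncomm_ring)
      E0 * h01 * E1 - hA0 * E1 + E0 * hA1 - h0 * (E1 * E1) + h1
  have L2 : (C - E2 * E0) * (C - E2 * E0) = C * C - 1 := by
    linear_combination (norm := noncomm_ring)
      E2 * h20 * E0 - hC2 * E0 + E2 * hC0 - h2 * (E0 * E0) + h0
  have L3 : (A - E0 * E1) * (C - E2 * E0) + (C - E2 * E0) * (A - E0 * E1)
      = -(A * C + C * A + B + B) := by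
    linear_combination (norm := noncomm_ring)
      E2 * h0 * E1 + E0 * E1 * h20 - E0 * h01 * E2 + h0 * (E1 * E2) - h12
        + 2 * (hA0 * E2) - 2 * (A * h20) + hA2 * E0 + E2 * hA0 - hC0 * E1 - E0 * hC1
        - 2 * hACc
  have L4 : (A - E0 * E1) * E0 + E0 * (A - E0 * E1) = 0 := by
    linear_combination (norm := noncomm_ring) - (E0 * h01) + hA0
  have L5 : (C - E2 * E0) * E0 + E0 * (C - E2 * E0) = 0 := by
    linear_combination (norm := noncomm_ring) - (h20 * E0) - hC0
  constructor
  · have expand : (x • (A - E0 * E1) + y • (C - E2 * E0)) * (x • (A - E0 * E1) + y • (C - E2 * E0))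
        = (x * x) • ((A - E0 * E1) * (A - E0 * E1))
          + (x * y) • ((A - E0 * E1) * (C - E2 * E0) + (C - E2 * E0) * (A - E0 * E1))
          + (y * y) • ((C - E2 * E0) * (C - E2 * E0)) := by
      simp only [add_mul, mul_add, smul_mul_assoc, mul_smul_comm, smul_add, smul_smul]
      module
    rw [expand, L1, L2, L3,
      show A * A - 1 = algebraMap ℝ H (α * α - 1) by rw [map_sub, map_mul, map_one],
      show C * C - 1 = algebraMap ℝ H (γ * γ - 1) by rw [map_sub, map_mul, map_one],
      show -(A * C + C * A + B + B) = algebraMap ℝ H (-(α * γ + γ * α + β + β)) by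
        rw [map_neg, map_add, map_add, map_add, map_mul, map_mul],
      Algebra.smul_def, Algebra.smul_def, Algebra.smul_def, ← map_mul, ← map_mul, ← map_mul,
      ← map_add, ← map_add,
      show x * x * (α * α - 1) + x * y * -(α * γ + γ * α + β + β) + y * y * (γ * γ - 1)
          = -1 by linear_combination -hxy,
      map_neg, map_one]
  · have expand2 : (x • (A - E0 * E1) + y • (C - E2 * E0)) * E0
        + E0 * (x • (A - E0 * E1) + y • (C - E2 * E0))
        = x • ((A - E0 * E1) * E0 + E0 * (A - E0 * E1))
          + y • ((C - E2 * E0) * E0 + E0 * (C - E2 * E0)) := by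
      simp only [add_mul, mul_add, smul_mul_assoc, mul_smul_comm, smul_add]
      module
    rw [expand2, L4, L5, smul_zero, smul_zero, add_zero]

/-- If two elements of a nontrivial `ℝ`-algebra square to `-1` and anticommute, the
subalgebra they generate is isomorphic to the quaternions. -/
lemma aux_quat (H : Type) [Ring H] [Algebra ℝ H] [Nontrivial H] (E0 v : H)
    (h0 : E0 * E0 = -1) (hvv : v * v = -1) (hanti : v * E0 + E0 * v = 0) :
    Nonempty ((Algebra.adjoin ℝ ({E0, v} : Set H)) ≃ₐ[ℝ] ℍ[ℝ]) := by
  have hvE : v * E0 = -(E0 * v) := eq_neg_of_add_eq_zero_left hanti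
  let q : QuaternionAlgebra.Basis H (-1 : ℝ) (0 : ℝ) (-1 : ℝ) :=
    { i := E0
      j := v
      k := E0 * v
      i_mul_i := by rw [h0]; module
      j_mul_j := by rw [hvv]; module
      i_mul_j := rfl
      j_mul_i := by rw [hvE]; module }
  let ψ : ℍ[ℝ] →ₐ[ℝ] H := q.liftHom
  have hinj : Function.Injective ψ := ψ.toRingHom.injective
  have hrange : ψ.range = Algebra.adjoin ℝ ({E0, v} : Set H) := by
    apply le_antisymm
    · rintro w ⟨p, rfl⟩
      have hE0 : E0 ∈ Algebra.adjoin ℝ ({E0, v} : Set H) :=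
        Algebra.subset_adjoin (Set.mem_insert _ _)
      have hvmem : v ∈ Algebra.adjoin ℝ ({E0, v} : Set H) :=
        Algebra.subset_adjoin (Set.mem_insert_of_mem _ rfl)
      show ψ p ∈ _
      rw [show ψ p = algebraMap ℝ H p.re + p.imI • E0 + p.imJ • v + p.imK • (E0 * v) from rfl]
      exact Subalgebra.add_mem _
        (Subalgebra.add_mem _
          (Subalgebra.add_mem _ (Subalgebra.algebraMap_mem _ _)
            (Subalgebra.smul_mem _ hE0 _))
          (Subalgebra.smul_mem _ hvmem _))
        (Subalgebra.smul_mem _ (Subalgebra.mul_mem _ hE0 hvmem) _)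
    · rw [Algebra.adjoin_le_iff]
      rintro w (rfl | rfl)
      · refine ⟨⟨0, 1, 0, 0⟩, ?_⟩
        show ψ ⟨0, 1, 0, 0⟩ = _
        rw [show ψ ⟨0, 1, 0, 0⟩ = q.lift ⟨0, 1, 0, 0⟩ from rfl, QuaternionAlgebra.Basis.lift]
        simp [q]
      · refine ⟨⟨0, 0, 1, 0⟩, ?_⟩
        show ψ ⟨0, 0, 1, 0⟩ = _
        rw [show ψ ⟨0, 0, 1, 0⟩ = q.lift ⟨0, 0, 1, 0⟩ from rfl, QuaternionAlgebra.Basis.lift]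
        simp [q]
  exact ⟨(Subalgebra.equivOfEq _ _ hrange.symm).trans (AlgEquiv.ofInjective ψ hinj).symm⟩

/-- If `det Q_{α,β,γ} > 0`, there are reals `x, y` with
`v = x(α - e₁e₂) + y(γ - e₃e₁)` satisfying `v² = -1`, `v` anticommuting with `e₁`,
and the subalgebra generated by `e₁, v` isomorphic to `ℍ`. -/
theorem stmt_12 (α β γ : ℝ)
    (hQ : 0 < Matrix.det !![(-1 : ℝ), α, γ; α, -1, β; γ, β, -1]) :
    ∃ (x y : ℝ) (v : HAlg α β γ),
      v = x • (algebraMap ℝ (HAlg α β γ) α - eH α β γ 0 * eH α β γ 1) +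
            y • (algebraMap ℝ (HAlg α β γ) γ - eH α β γ 2 * eH α β γ 0) ∧
        v * v = -1 ∧
        v * eH α β γ 0 + eH α β γ 0 * v = 0 ∧
        Nonempty ((Algebra.adjoin ℝ ({eH α β γ 0, v} : Set (HAlg α β γ))) ≃ₐ[ℝ] ℍ[ℝ]) := by
  have hD : 0 < (α * γ + β) ^ 2 - (1 - α ^ 2) * (1 - γ ^ 2) := by
    rw [Matrix.det_fin_three] at hQ
    simp [Matrix.cons_val] at hQ
    nlinarith [hQ]
  obtain ⟨x, y, hxy⟩ := exists_repr_one (1 - α ^ 2) (α * γ + β) (1 - γ ^ 2) hD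
  have hmk : ∀ {p q : FreeAlgebra ℝ (Fin 3)}, HRel α β γ p q →
      RingQuot.mkAlgHom ℝ (HRel α β γ) p = RingQuot.mkAlgHom ℝ (HRel α β γ) q :=
    fun h => RingQuot.mkAlgHom_rel ℝ h
  have hEdef : ∀ i, eH α β γ i = RingQuot.mkAlgHom ℝ (HRel α β γ) (FreeAlgebra.ι ℝ i) :=
    fun _ => rfl
  have h0 : eH α β γ 0 * eH α β γ 0 = -1 := by
    rw [hEdef, ← map_mul, hmk HRel.sq1, map_neg, map_one]
  have h1 : eH α β γ 1 * eH α β γ 1 = -1 := by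
    rw [hEdef, ← map_mul, hmk HRel.sq2, map_neg, map_one]
  have h2 : eH α β γ 2 * eH α β γ 2 = -1 := by
    rw [hEdef, ← map_mul, hmk HRel.sq3, map_neg, map_one]
  have h01 : eH α β γ 0 * eH α β γ 1 + eH α β γ 1 * eH α β γ 0 =
      algebraMap ℝ (HAlg α β γ) α + algebraMap ℝ (HAlg α β γ) α := by
    rw [hEdef, hEdef, ← map_mul, ← map_mul, ← map_add, hmk HRel.ac12, AlgHom.commutes,
      two_mul, map_add]
  have h12 : eH α β γ 1 * eH α β γ 2 + eH α β γ 2 * eH α β γ 1 =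
      algebraMap ℝ (HAlg α β γ) β + algebraMap ℝ (HAlg α β γ) β := by
    rw [hEdef, hEdef, ← map_mul, ← map_mul, ← map_add, hmk HRel.ac23, AlgHom.commutes,
      two_mul, map_add]
  have h20 : eH α β γ 2 * eH α β γ 0 + eH α β γ 0 * eH α β γ 2 =
      algebraMap ℝ (HAlg α β γ) γ + algebraMap ℝ (HAlg α β γ) γ := by
    rw [hEdef, hEdef, ← map_mul, ← map_mul, ← map_add, hmk HRel.ac31, AlgHom.commutes,
      two_mul, map_add]
  obtain ⟨hvv, hanti⟩ := aux_main (HAlg α β γ) α β γ x y (eH α β γ 0) (eH α β γ 1) (eH α β γ 2)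
    h0 h1 h2 h01 h12 h20 hxy
  exact ⟨x, y, _, rfl, hvv, hanti, aux_quat (HAlg α β γ) (eH α β γ 0) _ h0 hvv hanti⟩
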